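/- Let X be any complex Hilbert space and let H = ℓ²(ℕ, X) be the Hilbert space of square-summable X-valued sequences. Then the operator T on H defined by T(x₁, x₂, x₃, …) = 2(x₂, x₃, x₄, …) (twice the backward shift) is topologically transitive. -/
import Mathlib


/-- A bounded linear operator `T` on a complex Banach space `X` is topologically transitive
if for every pair `U, V` of nonempty open subsets of `X` there is a positive integer `n`
with `T^n(U) ∩ V ≠ ∅`. -/
def TopologicallyTransitive {X : Type*} [NormedAddCommGroup X] [NormedSpace ℂ X]
    (T : X →L[ℂ] X) : Prop :=
  ∀ U V : Set X, IsOpen U → IsOpen V → U.Nonempty → V.Nonempty →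
    ∃ n : ℕ, 0 < n ∧ ((T ^ n) '' U ∩ V).Nonempty

/-- Let `X` be a complex Hilbert space and `H = ℓ²(ℕ, X)`.  Twice the backward shift on `H`,
i.e. the operator `T` with `(T x)ₙ = 2 xₙ₊₁`, is topologically transitive. -/
theorem twice_backward_shift_topologicallyTransitive
    (X : Type*) [NormedAddCommGroup X] [InnerProductSpace ℂ X] [CompleteSpace X]
    (T : lp (fun _ : ℕ => X) 2 →L[ℂ] lp (fun _ : ℕ => X) 2)
    (hT : ∀ (x : lp (fun _ : ℕ => X) 2) (n : ℕ),
      (T x : ∀ _ : ℕ, X) n = (2 : ℂ) • (x : ∀ _ : ℕ, X) (n + 1)) :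
    TopologicallyTransitive T := by
  haveI : Fact ((1 : ENNReal) ≤ 2) := ⟨one_le_two⟩
  have hp' : 0 < (2 : ENNReal).toReal := by norm_num
  -- power formula for T
  have hTn : ∀ (k : ℕ) (x : lp (fun _ : ℕ => X) 2) (j : ℕ),
      ((T ^ k) x : ∀ _ : ℕ, X) j = ((2 : ℂ) ^ k) • (x : ∀ _ : ℕ, X) (j + k) := by
    intro k
    induction k with
    | zero => intro x j; simp
    | succ k ih =>
      intro x j
      rw [pow_succ, ContinuousLinearMap.mul_apply, ih (T x) j, hT x (j + k),
        smul_smul, ← pow_succ, Nat.add_assoc]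
  intro U V hU hV ⟨u, hu⟩ ⟨v, hv⟩
  obtain ⟨ε, hε, hball⟩ := Metric.isOpen_iff.mp hU u hu
  -- truncations of u converge
  have htrunc := ((lp.hasSum_single (E := fun _ : ℕ => X) (p := 2) (by norm_num) u).tendsto_sum_nat)
  have hN : ∀ᶠ n in Filter.atTop,
      ‖(∑ i ∈ Finset.range n, lp.single 2 i ((u : ∀ _ : ℕ, X) i)) - u‖ < ε / 2 := by
    have := Metric.tendsto_nhds.mp htrunc (ε / 2) (by linarith)
    filter_upwards [this] with n hn
    simpa [dist_eq_norm] using hn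
  -- tail smallness
  have hM : ∀ᶠ n in Filter.atTop, ((2 : ℝ) ^ n)⁻¹ * ‖v‖ < ε / 2 := by
    have h0 : Filter.Tendsto (fun n : ℕ => ((2 : ℝ)⁻¹) ^ n * ‖v‖) Filter.atTop (nhds 0) := by
      simpa using (tendsto_pow_atTop_nhds_zero_of_lt_one (r := (2:ℝ)⁻¹) (by norm_num) (by norm_num)).mul_const ‖v‖
    have := h0.eventually (eventually_lt_nhds (show (0:ℝ) < ε / 2 by linarith))
    filter_upwards [this] with n hn
    simpa [inv_pow] using hn
  obtain ⟨n, hn1, hnN, hnM⟩ : ∃ n : ℕ, 0 < n ∧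
      ‖(∑ i ∈ Finset.range n, lp.single 2 i ((u : ∀ _ : ℕ, X) i)) - u‖ < ε / 2 ∧
      ((2 : ℝ) ^ n)⁻¹ * ‖v‖ < ε / 2 := by
    obtain ⟨n, hn⟩ := ((Filter.eventually_gt_atTop 0).and (hN.and hM)).exists
    exact ⟨n, hn.1, hn.2.1, hn.2.2⟩
  set c : ℂ := ((2 : ℂ) ^ n)⁻¹ with hc
  set u' : lp (fun _ : ℕ => X) 2 := ∑ i ∈ Finset.range n, lp.single 2 i ((u : ∀ _ : ℕ, X) i)
    with hu'
  set s' : lp (fun _ : ℕ => X) 2 := c • v with hs'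
  -- the shifted tail
  set g : ∀ _ : ℕ, X := fun j => if h : n ≤ j then c • (v : ∀ _ : ℕ, X) (j - n) else 0 with hg
  have hinj : Function.Injective (fun k : ℕ => k + n) := add_left_injective n
  have hcomp : ∀ k : ℕ, g (k + n) = (s' : ∀ _ : ℕ, X) k := by
    intro k
    simp [hg, hs', lp.coeFn_smul, Pi.smul_apply, Nat.add_sub_cancel]
  have hsupp : ∀ j ∉ Set.range (fun k : ℕ => k + n),
      ‖g j‖ ^ (2 : ENNReal).toReal = 0 := by
    intro j hj
    have hjn : ¬ n ≤ j := by
      intro h; exact hj ⟨j - n, show j - n + n = j by omega⟩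
    simp [hg, hjn, Real.zero_rpow hp'.ne']
  have hmem : Memℓp g 2 := by
    apply memℓp_gen
    have hsum : Summable (fun k => ‖(s' : ∀ _ : ℕ, X) k‖ ^ (2 : ENNReal).toReal) :=
      (lp.hasSum_norm hp' s').summable
    have heq : ((fun j => ‖g j‖ ^ (2 : ENNReal).toReal) ∘ (fun k : ℕ => k + n))
        = fun k => ‖(s' : ∀ _ : ℕ, X) k‖ ^ (2 : ENNReal).toReal :=
      funext fun k => by rw [Function.comp_apply, hcomp]
    exact (hinj.summable_iff hsupp).mp (heq ▸ hsum)
  set s : lp (fun _ : ℕ => X) 2 := ⟨g, hmem⟩ with hsdef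
  have hs_norm : ‖s‖ = ‖s'‖ := by
    rw [lp.norm_eq_tsum_rpow hp' s, lp.norm_eq_tsum_rpow hp' s']
    congr 1
    rw [← hinj.tsum_eq (f := fun j => ‖(s : ∀ _ : ℕ, X) j‖ ^ (2 : ENNReal).toReal)
      (Function.support_subset_iff'.mpr hsupp)]
    exact tsum_congr fun k => by rw [show (s : ∀ _ : ℕ, X) (k + n) = g (k + n) from rfl, hcomp]
  have hcnorm : ‖c‖ = ((2 : ℝ) ^ n)⁻¹ := by
    rw [hc, norm_inv, norm_pow, RCLike.norm_two]
  have hs_small : ‖s‖ < ε / 2 := by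
    rw [hs_norm, hs', norm_smul, hcnorm]
    exact hnM
  set w : lp (fun _ : ℕ => X) 2 := u' + s with hw
  have hwU : w ∈ U := by
    apply hball
    rw [Metric.mem_ball, dist_eq_norm]
    have : w - u = (u' - u) + s := by rw [hw]; abel
    rw [this]
    calc ‖(u' - u) + s‖ ≤ ‖u' - u‖ + ‖s‖ := norm_add_le _ _
      _ < ε / 2 + ε / 2 := by exact add_lt_add hnN hs_small
      _ = ε := by ring
  have hTw : (T ^ n) w = v := by
    apply lp.ext
    funext j
    rw [hTn n w j]
    have hwcoe : (w : ∀ _ : ℕ, X) (j + n) = (u' : ∀ _ : ℕ, X) (j + n) + g (j + n) := by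
      rw [hw, lp.coeFn_add, Pi.add_apply]
    have hu'0 : (u' : ∀ _ : ℕ, X) (j + n) = 0 := by
      rw [hu', lp.coeFn_sum, Finset.sum_apply]
      apply Finset.sum_eq_zero
      intro i hi
      have : i ≠ j + n := by have := Finset.mem_range.mp hi; omega
      exact lp.single_apply_ne 2 i _ (this.symm)
    have hgval : g (j + n) = c • (v : ∀ _ : ℕ, X) j := by
      simp [hg, Nat.add_sub_cancel]
    rw [hwcoe, hu'0, hgval, zero_add, smul_smul, hc,
      mul_inv_cancel₀ (pow_ne_zero n two_ne_zero), one_smul]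
  exact ⟨n, hn1, v, ⟨w, hwU, hTw⟩, hv⟩
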